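/- Consider an ECO-system where two rules apply according to the parity of the label: σ_0(k) = αk + β_0 for even k and σ_1(k) = αk + β_1 for odd k (σ_i being the sum of the produced labels), and assume exactly m odd labels occur among the children of every node. Then the number of nodes at level n satisfies the linear recurrence f_{n+3} = α f_{n+2} + β_0 f_{n+1} + m(β_1 - β_0) f_n, equivalently F(z) = (1 + (s0 - α)z + (s1 - αs0 - β_0)z²)/(1 - αz - β_0 z² - m(β_1 - β_0)z³). -/

import Mathlib

open PowerSeries

private lemma my_filter_bind {α β : Type*} (s : Multiset α) (t : α → Multiset β)
    (p : β → Prop) [DecidablePred p] :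
    (s.bind t).filter p = s.bind fun a => (t a).filter p := by
  induction s using Multiset.induction with
  | empty => simp
  | cons a s ih => simp [Multiset.cons_bind, Multiset.filter_add, ih]

private lemma my_sum_map_ite {α : Type*} (s : Multiset α) (p : α → Prop) [DecidablePred p]
    (c : ℤ) :
    (s.map (fun k => if p k then c else 0)).sum = (Multiset.card (s.filter p)) * c := by
  induction s using Multiset.induction with
  | empty => simp
  | cons a s ih =>
    by_cases h : p a <;> simp [h, ih] <;> ring

/-- ECO-system with parity-dependent affine production sums
σ_0(k) = αk + β_0 (k even), σ_1(k) = αk + β_1 (k odd), with exactly m odd labels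
produced by every node. Then f_{n+3} = α f_{n+2} + β_0 f_{n+1} + m(β_1 - β_0) f_n,
equivalently (1 - αz - β_0 z² - m(β_1-β_0) z³) F = 1 + (s0-α)z + (s1 - αs0 - β_0)z²,
where s1 = f 2 is the sum of the labels at level 1. -/
theorem stmt_3 (s0 : ℕ) (hs0 : 1 ≤ s0) (e : ℕ → List ℕ) (α β0 β1 : ℤ) (m : ℕ)
    (hlen : ∀ k, 1 ≤ k → (e k).length = k)
    (hpos : ∀ k, 1 ≤ k → ∀ l ∈ e k, 1 ≤ l)
    (hsum0 : ∀ k, 1 ≤ k → k % 2 = 0 → ((e k).sum : ℤ) = α * k + β0)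
    (hsum1 : ∀ k, 1 ≤ k → k % 2 = 1 → ((e k).sum : ℤ) = α * k + β1)
    (hodd : ∀ k, 1 ≤ k → ((e k).filter (fun l => l % 2 = 1)).length = m)
    (levels : ℕ → Multiset ℕ)
    (hlev0 : levels 0 = {s0})
    (hlev : ∀ n, levels (n + 1) = (levels n).bind (fun k => (e k : Multiset ℕ)))
    (f : ℕ → ℕ) (hf : ∀ n, f n = Multiset.card (levels n)) :
    (∀ n, (f (n + 3) : ℤ) =
      α * f (n + 2) + β0 * f (n + 1) + (m : ℤ) * (β1 - β0) * f n) ∧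
    (1 - C (R := ℚ) (α : ℚ) * X - C (R := ℚ) (β0 : ℚ) * X ^ 2
        - C (R := ℚ) ((m : ℚ) * ((β1 : ℚ) - (β0 : ℚ))) * X ^ 3) * mk (fun n => (f n : ℚ))
      = 1 + C (R := ℚ) ((s0 : ℚ) - (α : ℚ)) * X
          + C (R := ℚ) ((f 2 : ℚ) - (α : ℚ) * (s0 : ℚ) - (β0 : ℚ)) * X ^ 2 := by
  -- all labels are positive
  have hposlev : ∀ n, ∀ l ∈ levels n, 1 ≤ l := by
    intro n
    induction n with
    | zero => intro l hl; rw [hlev0] at hl; simp at hl; omega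
    | succ n ih =>
      intro l hl
      rw [hlev n] at hl
      rcases Multiset.mem_bind.mp hl with ⟨k, hk, hlk⟩
      exact hpos k (ih k hk) l (by simpa using hlk)
  -- f (n+1) = sum of labels at level n
  have hcard : ∀ n, f (n + 1) = (levels n).sum := by
    intro n
    rw [hf, hlev, Multiset.card_bind]
    have : Multiset.map (Multiset.card ∘ fun k => (↑(e k) : Multiset ℕ)) (levels n)
        = Multiset.map id (levels n) := by
      apply Multiset.map_congr rfl
      intro k hk
      simp [Multiset.coe_card, hlen k (hposlev n k hk)]
    rw [this, Multiset.map_id]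
  have f0 : f 0 = 1 := by rw [hf, hlev0]; rfl
  have f1 : f 1 = s0 := by
    rw [hcard 0, hlev0, Multiset.sum_singleton]
  -- number of odd labels
  set O : ℕ → ℕ := fun n => Multiset.card ((levels n).filter (fun l => l % 2 = 1)) with hOdef
  have hO : ∀ n, O (n + 1) = m * f n := by
    intro n
    have : O (n + 1) = (Multiset.map
        (fun k => Multiset.card (((e k : Multiset ℕ)).filter (fun l => l % 2 = 1)))
        (levels n)).sum := by
      simp only [hOdef, hlev n, my_filter_bind, Multiset.card_bind]
      try rfl
    rw [this]
    have h2 : Multiset.map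
        (fun k => Multiset.card (((e k : Multiset ℕ)).filter (fun l => l % 2 = 1)))
        (levels n) = Multiset.map (Function.const ℕ m) (levels n) := by
      apply Multiset.map_congr rfl
      intro k hk
      rw [Multiset.filter_coe, Multiset.coe_card]
      simpa using hodd k (hposlev n k hk)
    rw [h2, Multiset.map_const, Multiset.sum_replicate, ← hf, smul_eq_mul, Nat.mul_comm]
  -- key sum identity
  have hsum : ∀ n, ((levels (n + 1)).sum : ℤ)
      = α * ((levels n).sum : ℤ) + β0 * (f n : ℤ) + (β1 - β0) * (O n : ℤ) := by
    intro n
    have h1 : ((levels (n + 1)).sum : ℤ)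
        = ((levels n).map (fun k => ((e k).sum : ℤ))).sum := by
      rw [hlev n, Multiset.sum_bind, Nat.cast_multiset_sum, Multiset.map_map]
      congr 1
    rw [h1]
    have h2 : (levels n).map (fun k => ((e k).sum : ℤ))
        = (levels n).map (fun (k : ℕ) => α * (k : ℤ) + β0
            + (if k % 2 = 1 then β1 - β0 else 0)) := by
      apply Multiset.map_congr rfl
      intro k hk
      have hk1 := hposlev n k hk
      rcases Nat.mod_two_eq_zero_or_one k with h | h
      · rw [hsum0 k hk1 h]; simp [h]
      · rw [hsum1 k hk1 h]; simp [h]; try ring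
    rw [h2, Multiset.sum_map_add, Multiset.sum_map_add, Multiset.sum_map_mul_left,
      my_sum_map_ite]
    have h3 : (Multiset.map (fun (k : ℕ) => (β0 : ℤ)) (levels n)).sum = (f n : ℤ) * β0 := by
      rw [show (fun (k : ℕ) => (β0 : ℤ)) = Function.const ℕ (β0 : ℤ) from rfl,
        Multiset.map_const, Multiset.sum_replicate, hf, nsmul_eq_mul]
    have h4 : (Multiset.map (fun (k : ℕ) => ((k : ℕ) : ℤ)) (levels n)).sum
        = ((levels n).sum : ℤ) := (Nat.cast_multiset_sum _).symm
    rw [h3, h4]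
    simp only [hOdef]
    ring
  -- the recurrence
  have hrec : ∀ n, (f (n + 3) : ℤ)
      = α * f (n + 2) + β0 * f (n + 1) + (m : ℤ) * (β1 - β0) * f n := by
    intro n
    have e1 : (f (n + 3) : ℤ) = ((levels (n + 2)).sum : ℤ) := by rw [hcard (n + 2)]
    have e2 : (f (n + 2) : ℤ) = ((levels (n + 1)).sum : ℤ) := by rw [hcard (n + 1)]
    rw [e1, hsum (n + 1), ← e2, hO n]
    push_cast
    ring
  refine ⟨hrec, ?_⟩
  -- rational version of the recurrence
  have hrecQ : ∀ n, (f (n + 3) : ℚ)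
      = (α : ℚ) * f (n + 2) + (β0 : ℚ) * f (n + 1) + (m : ℚ) * ((β1 : ℚ) - β0) * f n := by
    intro n
    have := hrec n
    have := congrArg (fun z : ℤ => (z : ℚ)) this
    push_cast at this
    exact this
  ext n
  have hX : ∀ (d : ℕ) (F : ℚ⟦X⟧), coeff d (X * F)
      = if 1 ≤ d then coeff (d - 1) F else 0 := by
    intro d F
    rw [← pow_one (X : ℚ⟦X⟧), PowerSeries.coeff_X_pow_mul']
  simp only [sub_mul, one_mul, map_sub, map_add, map_one, mul_assoc,
    PowerSeries.coeff_C_mul, PowerSeries.coeff_X_pow_mul', hX,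
    PowerSeries.coeff_mk, PowerSeries.coeff_one, PowerSeries.coeff_X,
    PowerSeries.coeff_X_pow]
  rcases n with _ | _ | _ | n
  · norm_num [f0]
  · norm_num [f0, f1]
  · norm_num [f0, f1]
  · have := hrecQ n
    have c1 : (1 : ℕ) ≤ n + 1 + 1 + 1 := by omega
    have c2 : (2 : ℕ) ≤ n + 1 + 1 + 1 := by omega
    have c3 : (3 : ℕ) ≤ n + 1 + 1 + 1 := by omega
    have d1 : n + 1 + 1 + 1 - 1 = n + 2 := by omega
    have d2 : n + 1 + 1 + 1 - 2 = n + 1 := by omega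
    have d3 : n + 1 + 1 + 1 - 3 = n := by omega
    rw [if_pos c1, if_pos c2, if_pos c3, if_neg (by omega), if_neg (by omega),
      if_neg (by omega), d1, d2, d3]
    push_cast at this ⊢
    linarith [this]
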